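/- arXiv:1709.01278 — 3 statements merged into one kernel-verified Lean document; each statement's English description precedes it below -/
import Mathlib

section
/- Let D be a finite-dimensional division algebra over a field k, and let k(q) be the field of rational functions in one variable over k. Then D ⊗_k k(q) is a division algebra over k(q). -/
open scoped TensorProduct

open Polynomial

/-- If `D` is a finite-dimensional division algebra over a field `k`
(an associative unital `k`-algebra in which every nonzero element is invertible),
then `D ⊗_k k(q)` is a division algebra over the rational function field `k(q)`. -/
theorem baseChange_ratFunc_divisionAlgebra
    (k D : Type) [Field k] [Ring D] [Nontrivial D] [Algebra k D]
    [FiniteDimensional k D]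
    (hD : ∀ d : D, d ≠ 0 → IsUnit d) :
    Nontrivial (D ⊗[k] RatFunc k) ∧
      ∀ x : D ⊗[k] RatFunc k, x ≠ 0 → IsUnit x := by
  classical
  -- D has no zero divisors
  haveI hnzd : NoZeroDivisors D := ⟨by
    intro a b hab
    by_contra h
    push_neg at h
    exact h.2 (((hD a h.1).mul_right_eq_zero).mp hab)⟩
  set F : k[X] →+* RatFunc k := algebraMap k[X] (RatFunc k) with hF
  -- the natural map from D ⊗ k[X]
  set f : k[X] →ₐ[k] RatFunc k := IsScalarTower.toAlgHom k k[X] (RatFunc k) with hf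
  set ι : D ⊗[k] k[X] →ₐ[k] D ⊗[k] RatFunc k :=
    Algebra.TensorProduct.map (AlgHom.id k D) f with hιdef
  have hfinj : Function.Injective f := RatFunc.algebraMap_injective k
  have hι : Function.Injective ι := by
    have h1 : ι.toLinearMap = LinearMap.lTensor D f.toLinearMap :=
      TensorProduct.ext' fun d p => by simp [ι]
    have h2 : Function.Injective (LinearMap.lTensor D f.toLinearMap) :=
      Module.Flat.lTensor_preserves_injective_linearMap _ hfinj
    show Function.Injective ι.toLinearMap
    rw [h1]; exact h2
  have hιtmul : ∀ c : k[X], ι ((1 : D) ⊗ₜ[k] c) = (1 : D) ⊗ₜ[k] F c := fun c => by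
    simp [ι, f, F]
  -- 1 ⊗ r is central
  have hcent : ∀ (y : D ⊗[k] RatFunc k) (r : RatFunc k),
      y * (1 ⊗ₜ[k] r) = (1 ⊗ₜ[k] r) * y := by
    intro y r
    induction y using TensorProduct.induction_on with
    | zero => simp
    | tmul d g => simp [Algebra.TensorProduct.tmul_mul_tmul, mul_comm]
    | add a b ha hb => rw [add_mul, mul_add, ha, hb]
  -- clearing denominators
  have hclear : ∀ x : D ⊗[k] RatFunc k, ∃ (c : k[X]) (t : D ⊗[k] k[X]),
      c ≠ 0 ∧ x * (1 ⊗ₜ[k] F c) = ι t := by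
    intro x
    induction x using TensorProduct.induction_on with
    | zero => exact ⟨1, 0, one_ne_zero, by simp⟩
    | tmul d g =>
        refine ⟨g.denom, d ⊗ₜ[k] g.num, g.denom_ne_zero, ?_⟩
        have hg : g * F g.denom = F g.num := by
          nth_rewrite 1 [← RatFunc.num_div_denom g]
          rw [hF, div_mul_cancel₀ _ (RatFunc.algebraMap_ne_zero g.denom_ne_zero)]
        simp [Algebra.TensorProduct.tmul_mul_tmul, hg, ι, f, F]
    | add a b ha hb =>
        obtain ⟨c, t, hc, ht⟩ := ha
        obtain ⟨c', t', hc', ht'⟩ := hb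
        refine ⟨c * c', t * (1 ⊗ₜ[k] c') + t' * (1 ⊗ₜ[k] c), mul_ne_zero hc hc', ?_⟩
        have h1 : (1 : D) ⊗ₜ[k] F (c * c') = ((1 : D) ⊗ₜ[k] F c) * ((1 : D) ⊗ₜ[k] F c') := by
          rw [Algebra.TensorProduct.tmul_mul_tmul, one_mul, map_mul]
        have h2 : (1 : D) ⊗ₜ[k] F (c * c') = ((1 : D) ⊗ₜ[k] F c') * ((1 : D) ⊗ₜ[k] F c) := by
          rw [Algebra.TensorProduct.tmul_mul_tmul, one_mul, map_mul, mul_comm (F c')]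
        calc (a + b) * (1 ⊗ₜ[k] F (c * c'))
            = a * (1 ⊗ₜ[k] F (c * c')) + b * (1 ⊗ₜ[k] F (c * c')) := add_mul _ _ _
          _ = a * ((1 ⊗ₜ[k] F c) * (1 ⊗ₜ[k] F c'))
              + b * ((1 ⊗ₜ[k] F c') * (1 ⊗ₜ[k] F c)) := by rw [← h1, ← h2]
          _ = (a * (1 ⊗ₜ[k] F c)) * (1 ⊗ₜ[k] F c')
              + (b * (1 ⊗ₜ[k] F c')) * (1 ⊗ₜ[k] F c) := by rw [mul_assoc, mul_assoc]
          _ = ι t * ι (1 ⊗ₜ[k] c') + ι t' * ι (1 ⊗ₜ[k] c) := by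
              rw [ht, ht', hιtmul, hιtmul]
          _ = ι (t * (1 ⊗ₜ[k] c') + t' * (1 ⊗ₜ[k] c)) := by
              rw [map_add, map_mul, map_mul]
  -- units of the form 1 ⊗ c
  have hunit : ∀ c : k[X], c ≠ 0 → IsUnit ((1 : D) ⊗ₜ[k] F c) := by
    intro c hc
    have h1 : IsUnit (F c) := (RatFunc.algebraMap_ne_zero hc).isUnit
    have := h1.map (Algebra.TensorProduct.includeRight (R := k) (A := D))
    simpa using this
  -- no zero divisors in the base change
  haveI : NoZeroDivisors (D ⊗[k] RatFunc k) := by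
    constructor
    intro x y hxy
    obtain ⟨c, t, hc, ht⟩ := hclear x
    obtain ⟨c', t', hc', ht'⟩ := hclear y
    have key : ι (t * t') = 0 := by
      rw [map_mul, ← ht, ← ht']
      calc (x * (1 ⊗ₜ[k] F c)) * (y * (1 ⊗ₜ[k] F c'))
          = x * ((1 ⊗ₜ[k] F c) * (y * (1 ⊗ₜ[k] F c'))) := mul_assoc _ _ _
        _ = x * ((y * (1 ⊗ₜ[k] F c')) * (1 ⊗ₜ[k] F c)) := by
            rw [hcent (y * (1 ⊗ₜ[k] F c')) (F c)]
        _ = (x * y) * ((1 ⊗ₜ[k] F c') * (1 ⊗ₜ[k] F c)) := by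
            rw [mul_assoc y, ← mul_assoc x]
        _ = 0 := by rw [hxy, zero_mul]
    have htt : t * t' = 0 := hι (by simpa using key)
    -- polynomial algebra over D is a domain, transport through polyEquivTensor
    haveI : NoZeroDivisors (D ⊗[k] k[X]) := by
      constructor
      intro a b hab
      have h0 : (polyEquivTensor k D).symm a * (polyEquivTensor k D).symm b = 0 := by
        rw [← map_mul, hab, map_zero]
      rcases mul_eq_zero.mp h0 with h | h
      · exact Or.inl (by simpa using congrArg (polyEquivTensor k D) h)
      · exact Or.inr (by simpa using congrArg (polyEquivTensor k D) h)
    rcases mul_eq_zero.mp htt with h | h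
    · left
      have : x * (1 ⊗ₜ[k] F c) = 0 := by rw [ht, h, map_zero]
      exact ((hunit c hc).mul_left_eq_zero).mp this
    · right
      have : y * (1 ⊗ₜ[k] F c') = 0 := by rw [ht', h, map_zero]
      exact ((hunit c' hc').mul_left_eq_zero).mp this
  -- nontriviality
  haveI : Nontrivial (D ⊗[k] k[X]) := (polyEquivTensor k D).symm.toEquiv.nontrivial
  haveI hnt : Nontrivial (D ⊗[k] RatFunc k) := by
    refine nontrivial_of_ne 1 0 fun h10 => ?_
    have : (1 : D ⊗[k] k[X]) = 0 := hι (by simp [h10])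
    exact one_ne_zero this
  haveI : IsDomain (D ⊗[k] RatFunc k) := NoZeroDivisors.to_isDomain _
  -- transport to RatFunc k ⊗ D which is finite dimensional over RatFunc k
  refine ⟨hnt, fun x hx => ?_⟩
  let e : (D ⊗[k] RatFunc k) ≃ₐ[k] (RatFunc k ⊗[k] D) :=
    Algebra.TensorProduct.comm k D (RatFunc k)
  haveI : IsDomain (RatFunc k ⊗[k] D) :=
    MulEquiv.isDomain (D ⊗[k] RatFunc k) e.symm.toRingEquiv.toMulEquiv
  have hex : e x ≠ 0 := fun h => hx (by simpa using congrArg e.symm h)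
  have hux : IsUnit (e x) := FiniteDimensional.isUnit (RatFunc k) hex
  have := hux.map e.symm.toRingEquiv.toRingHom
  simpa using this
end

section
/- In the setting of the FRT-type Hopf algebra A generated by entries of T and T^{-1} with relations R T_1 T_2 = T_2 T_1 R and T T^{-1} = T^{-1} T = 1 (R the image of the R-matrix of a quasitriangular Hopf algebra U on V ⊗ V), the following identity holds in End(V) ⊗ A: writing T = Σ_k c_k ⊗ t_k and T^{-1} = Σ_i c'_i ⊗ t'_i, one has Σ_{i,k} c'_i u c_k u^{-1} ⊗ t_k t'_i = 1 ⊗ 1, where u ∈ End(V) is the image of the Drinfeld element. -/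
open scoped TensorProduct

section FRT

variable (k : Type) [Field k] (n : ℕ)

/-- Generators: `Sum.inl (i,j)` is `t_{ij}`, `Sum.inr (i,j)` is `t̃_{ij}`. -/
abbrev FRTGen (n : ℕ) := (Fin n × Fin n) ⊕ (Fin n × Fin n)

/-- The defining relations of the FRT-type algebra: `R T₁ T₂ = T₂ T₁ R` and
`T T̃ = 1 = T̃ T`. -/
inductive FRTRel (R : Matrix (Fin n × Fin n) (Fin n × Fin n) k) :
    FreeAlgebra k (FRTGen n) → FreeAlgebra k (FRTGen n) → Prop
  | rtt (i j m l : Fin n) : FRTRel R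
      (∑ a : Fin n, ∑ b : Fin n, R (i, j) (a, b) •
        (FreeAlgebra.ι k (Sum.inl (a, m) : FRTGen n) *
          FreeAlgebra.ι k (Sum.inl (b, l) : FRTGen n)))
      (∑ a : Fin n, ∑ b : Fin n, R (a, b) (m, l) •
        (FreeAlgebra.ι k (Sum.inl (j, b) : FRTGen n) *
          FreeAlgebra.ι k (Sum.inl (i, a) : FRTGen n)))
  | inv₁ (i j : Fin n) : FRTRel R
      (∑ a : Fin n, FreeAlgebra.ι k (Sum.inl (i, a) : FRTGen n) *
        FreeAlgebra.ι k (Sum.inr (a, j) : FRTGen n))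
      (if i = j then 1 else 0)
  | inv₂ (i j : Fin n) : FRTRel R
      (∑ a : Fin n, FreeAlgebra.ι k (Sum.inr (i, a) : FRTGen n) *
        FreeAlgebra.ι k (Sum.inl (a, j) : FRTGen n))
      (if i = j then 1 else 0)

/-- The FRT-type algebra `A` generated by the `t_{ij}` and `t̃_{ij}`. -/
abbrev FRTAlg (R : Matrix (Fin n × Fin n) (Fin n × Fin n) k) := RingQuot (FRTRel k n R)

variable (R : Matrix (Fin n × Fin n) (Fin n × Fin n) k)

/-- The generator `t_{ij}` of the FRT algebra. -/
def tGen (i j : Fin n) : FRTAlg k n R :=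
  RingQuot.mkAlgHom k (FRTRel k n R) (FreeAlgebra.ι k (Sum.inl (i, j) : FRTGen n))

/-- The generator `t̃_{ij}` of the FRT algebra. -/
def ttGen (i j : Fin n) : FRTAlg k n R :=
  RingQuot.mkAlgHom k (FRTRel k n R) (FreeAlgebra.ι k (Sum.inr (i, j) : FRTGen n))

/-- The product of two elements of `End(V)ᵒᵖ ⊗ End(V)` in terms of their matrices of
"components": an operator `X` on `V ⊗ V` has components `X_{(ik),(jl)}`, and the
product in `End(V)ᵒᵖ ⊗ End(V)` is
`(X ⋆ Y)_{(ik),(jl)} = ∑_{m,p} X_{(mk),(jp)} Y_{(im),(pl)}`. -/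
def opMul (X Y : Matrix (Fin n × Fin n) (Fin n × Fin n) k) :
    Matrix (Fin n × Fin n) (Fin n × Fin n) k :=
  fun p q => ∑ m : Fin n, ∑ l : Fin n, X (m, p.2) (q.1, l) * Y (p.1, m) (l, q.2)

/-- The element `u = ∑ q_i p_i ∈ End(V)` built out of the inverse `∑ p_i ⊗ q_i` of
`R` in `End(V)ᵒᵖ ⊗ End(V)`, in matrix components. -/
def uMat (P : Matrix (Fin n × Fin n) (Fin n × Fin n) k) : Matrix (Fin n) (Fin n) k :=
  fun a b => ∑ m : Fin n, P (m, a) (b, m)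

theorem lemA (i j m l : Fin n) :
    (∑ a : Fin n, ∑ b : Fin n, R (i, j) (a, b) • (tGen k n R a m * tGen k n R b l)) =
    (∑ a : Fin n, ∑ b : Fin n, R (a, b) (m, l) • (tGen k n R j b * tGen k n R i a)) := by
  have h := RingQuot.mkAlgHom_rel k (FRTRel.rtt (k := k) (n := n) (R := R) i j m l)
  simpa [tGen, map_sum, map_smul, map_mul] using h

theorem lemB (i j : Fin n) :
    (∑ a : Fin n, tGen k n R i a * ttGen k n R a j) =
    (if i = j then (1 : FRTAlg k n R) else 0) := by
  have h := RingQuot.mkAlgHom_rel k (FRTRel.inv₁ (k := k) (n := n) (R := R) i j)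
  simpa [tGen, ttGen, map_sum, map_mul, apply_ite (RingQuot.mkAlgHom k (FRTRel k n R))]
    using h

theorem lemC (i j : Fin n) :
    (∑ a : Fin n, ttGen k n R i a * tGen k n R a j) =
    (if i = j then (1 : FRTAlg k n R) else 0) := by
  have h := RingQuot.mkAlgHom_rel k (FRTRel.inv₂ (k := k) (n := n) (R := R) i j)
  simpa [tGen, ttGen, map_sum, map_mul, apply_ite (RingQuot.mkAlgHom k (FRTRel k n R))]
    using h


theorem pullPair {ι κ : Type} [Fintype ι] [Fintype κ] {A : Type} [AddCommMonoid A] [Module k A]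
    (c : ι → k) (d : ι → κ → k) (x : κ → A) :
    ∑ i : ι, c i • (∑ j : κ, d i j • x j) = ∑ j : κ, (∑ i : ι, c i * d i j) • x j := by
  simp only [Finset.smul_sum, smul_smul]
  rw [Finset.sum_comm]
  exact Finset.sum_congr rfl fun j _ => (Finset.sum_smul).symm

theorem pullPairMul {ι κ : Type} [Fintype ι] [Fintype κ]
    (c : ι → k) (d : ι → κ → k) (x : κ → k) :
    ∑ i : ι, c i * (∑ j : κ, d i j * x j) = ∑ j : κ, (∑ i : ι, c i * d i j) * x j := by
  simp only [Finset.mul_sum, ← mul_assoc]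
  rw [Finset.sum_comm]
  exact Finset.sum_congr rfl fun j _ => (Finset.sum_mul _ _ _).symm

theorem pull22 {A : Type} [AddCommMonoid A] [Module k A]
    (c : Fin n → Fin n → k) (d : Fin n → Fin n → Fin n → Fin n → k)
    (x : Fin n → Fin n → A) :
    ∑ i : Fin n, ∑ γ : Fin n, c i γ • (∑ j : Fin n, ∑ a : Fin n, d i γ j a • x j a)
      = ∑ j : Fin n, ∑ a : Fin n, (∑ i : Fin n, ∑ γ : Fin n, c i γ * d i γ j a) • x j a := by
  have e1 : ∑ i : Fin n, ∑ γ : Fin n, c i γ • (∑ j : Fin n, ∑ a : Fin n, d i γ j a • x j a)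
      = ∑ p : Fin n × Fin n, c p.1 p.2 •
          (∑ q : Fin n × Fin n, d p.1 p.2 q.1 q.2 • x q.1 q.2) := by
    rw [Fintype.sum_prod_type]
    exact Finset.sum_congr rfl fun i _ => Finset.sum_congr rfl fun γ _ => by
      rw [Fintype.sum_prod_type]
  rw [e1, pullPair k]
  rw [Fintype.sum_prod_type]
  exact Finset.sum_congr rfl fun j _ => Finset.sum_congr rfl fun a _ => by
    rw [Fintype.sum_prod_type]

theorem pull3 {A : Type} [AddCommMonoid A] [Module k A]
    (C : Fin n → Fin n → Fin n → k) (x : Fin n → Fin n → A) :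
    ∑ α : Fin n, ∑ j : Fin n, ∑ a : Fin n, C α j a • x j a
      = ∑ j : Fin n, ∑ a : Fin n, (∑ α : Fin n, C α j a) • x j a := by
  rw [Finset.sum_comm]
  refine Finset.sum_congr rfl fun j _ => ?_
  rw [Finset.sum_comm]
  exact Finset.sum_congr rfl fun a _ => (Finset.sum_smul).symm

-- T̃₂ (R T₁ T₂) T̃₂  :  right multiplication collapse
theorem lemD1 (i j m γ : Fin n) :
    (∑ a : Fin n, R (i, j) (a, γ) • tGen k n R a m)
      = ∑ l : Fin n, ∑ a : Fin n, ∑ b : Fin n,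
          R (a, b) (m, l) • (tGen k n R j b * (tGen k n R i a * ttGen k n R l γ)) := by
  have H : (∑ l : Fin n, (∑ a : Fin n, ∑ b : Fin n,
        R (i, j) (a, b) • (tGen k n R a m * tGen k n R b l)) * ttGen k n R l γ)
      = ∑ l : Fin n, (∑ a : Fin n, ∑ b : Fin n,
        R (a, b) (m, l) • (tGen k n R j b * tGen k n R i a)) * ttGen k n R l γ :=
    Finset.sum_congr rfl fun l _ => by rw [lemA]
  have hL : (∑ l : Fin n, (∑ a : Fin n, ∑ b : Fin n,
        R (i, j) (a, b) • (tGen k n R a m * tGen k n R b l)) * ttGen k n R l γ)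
      = ∑ a : Fin n, R (i, j) (a, γ) • tGen k n R a m := by
    simp only [Finset.sum_mul, smul_mul_assoc, mul_assoc]
    rw [Finset.sum_comm]
    refine Finset.sum_congr rfl fun a _ => ?_
    rw [Finset.sum_comm]
    calc ∑ b : Fin n, ∑ l : Fin n,
          R (i, j) (a, b) • (tGen k n R a m * (tGen k n R b l * ttGen k n R l γ))
        = ∑ b : Fin n, R (i, j) (a, b) •
            (tGen k n R a m * ∑ l : Fin n, tGen k n R b l * ttGen k n R l γ) := by
          refine Finset.sum_congr rfl fun b _ => ?_
          rw [Finset.mul_sum, Finset.smul_sum]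
      _ = ∑ b : Fin n, R (i, j) (a, b) •
            (tGen k n R a m * (if b = γ then 1 else 0)) := by
          refine Finset.sum_congr rfl fun b _ => ?_
          rw [lemB]
      _ = R (i, j) (a, γ) • tGen k n R a m := by
          simp [mul_ite, smul_ite, Finset.sum_ite_eq']
  have hR : (∑ l : Fin n, (∑ a : Fin n, ∑ b : Fin n,
        R (a, b) (m, l) • (tGen k n R j b * tGen k n R i a)) * ttGen k n R l γ)
      = ∑ l : Fin n, ∑ a : Fin n, ∑ b : Fin n,
          R (a, b) (m, l) • (tGen k n R j b * (tGen k n R i a * ttGen k n R l γ)) := by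
    simp only [Finset.sum_mul, smul_mul_assoc, mul_assoc]
  rw [← hL, H, hR]

-- T̃₂ R T₁ = T₁ R T̃₂
theorem lemD2 (i β m γ : Fin n) :
    (∑ j : Fin n, ∑ a : Fin n, R (i, j) (a, γ) • (ttGen k n R β j * tGen k n R a m))
      = ∑ l : Fin n, ∑ a : Fin n,
          R (a, β) (m, l) • (tGen k n R i a * ttGen k n R l γ) := by
  have H : (∑ j : Fin n, ttGen k n R β j * (∑ a : Fin n, R (i, j) (a, γ) • tGen k n R a m))
      = ∑ j : Fin n, ttGen k n R β j *
          (∑ l : Fin n, ∑ a : Fin n, ∑ b : Fin n,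
            R (a, b) (m, l) • (tGen k n R j b * (tGen k n R i a * ttGen k n R l γ))) :=
    Finset.sum_congr rfl fun j _ => by rw [lemD1]
  have hL : (∑ j : Fin n, ttGen k n R β j * (∑ a : Fin n, R (i, j) (a, γ) • tGen k n R a m))
      = ∑ j : Fin n, ∑ a : Fin n, R (i, j) (a, γ) • (ttGen k n R β j * tGen k n R a m) := by
    simp only [Finset.mul_sum, mul_smul_comm]
  have hR : (∑ j : Fin n, ttGen k n R β j *
        (∑ l : Fin n, ∑ a : Fin n, ∑ b : Fin n,
          R (a, b) (m, l) • (tGen k n R j b * (tGen k n R i a * ttGen k n R l γ))))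
      = ∑ l : Fin n, ∑ a : Fin n,
          R (a, β) (m, l) • (tGen k n R i a * ttGen k n R l γ) := by
    simp only [Finset.mul_sum, mul_smul_comm]
    rw [Finset.sum_comm]
    refine Finset.sum_congr rfl fun l _ => ?_
    rw [Finset.sum_comm]
    refine Finset.sum_congr rfl fun a _ => ?_
    rw [Finset.sum_comm]
    calc ∑ b : Fin n, ∑ j : Fin n, R (a, b) (m, l) •
          (ttGen k n R β j * (tGen k n R j b * (tGen k n R i a * ttGen k n R l γ)))
        = ∑ b : Fin n, R (a, b) (m, l) •
            ((∑ j : Fin n, ttGen k n R β j * tGen k n R j b) *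
              (tGen k n R i a * ttGen k n R l γ)) := by
          refine Finset.sum_congr rfl fun b _ => ?_
          rw [Finset.sum_mul, Finset.smul_sum]
          exact Finset.sum_congr rfl fun j _ => by rw [mul_assoc]
      _ = ∑ b : Fin n, R (a, b) (m, l) •
            ((if β = b then 1 else 0) * (tGen k n R i a * ttGen k n R l γ)) := by
          refine Finset.sum_congr rfl fun b _ => ?_
          rw [lemC]
      _ = R (a, β) (m, l) • (tGen k n R i a * ttGen k n R l γ) := by
          simp [ite_mul, smul_ite, Finset.sum_ite_eq]
  rw [← hL, H, hR]


theorem exchangeGen {ι κ : Type} [Fintype ι] [Fintype κ] {A : Type} [AddCommMonoid A]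
    [Module k A] (c : ι → k) (d : κ → k) (x : ι → κ → A) :
    ∑ i : ι, c i • (∑ q : κ, d q • x i q) = ∑ q : κ, d q • (∑ i : ι, c i • x i q) := by
  calc ∑ i : ι, c i • (∑ q : κ, d q • x i q)
      = ∑ i : ι, ∑ q : κ, (c i * d q) • x i q := by simp only [Finset.smul_sum, smul_smul]
    _ = ∑ q : κ, ∑ i : ι, (c i * d q) • x i q := Finset.sum_comm
    _ = ∑ q : κ, d q • (∑ i : ι, c i • x i q) := by
        refine Finset.sum_congr rfl fun q _ => ?_
        rw [Finset.smul_sum]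
        refine Finset.sum_congr rfl fun i _ => ?_
        rw [smul_smul, mul_comm]

theorem exchange22 {A : Type} [AddCommMonoid A] [Module k A]
    (c : Fin n → Fin n → k) (d : Fin n → Fin n → k)
    (x : Fin n → Fin n → Fin n → Fin n → A) :
    ∑ i : Fin n, ∑ γ : Fin n, c i γ • (∑ l : Fin n, ∑ a : Fin n, d l a • x i γ l a)
      = ∑ l : Fin n, ∑ a : Fin n, d l a • (∑ i : Fin n, ∑ γ : Fin n, c i γ • x i γ l a) := by
  have e1 : ∑ i : Fin n, ∑ γ : Fin n, c i γ • (∑ l : Fin n, ∑ a : Fin n, d l a • x i γ l a)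
      = ∑ p : Fin n × Fin n, c p.1 p.2 •
          (∑ q : Fin n × Fin n, d q.1 q.2 • x p.1 p.2 q.1 q.2) := by
    rw [Fintype.sum_prod_type]
    exact Finset.sum_congr rfl fun i _ => Finset.sum_congr rfl fun γ _ => by
      rw [Fintype.sum_prod_type]
  rw [e1, exchangeGen k]
  rw [Fintype.sum_prod_type]
  exact Finset.sum_congr rfl fun l _ => Finset.sum_congr rfl fun a _ => by
    rw [Fintype.sum_prod_type]

theorem deltaDiag (j a : Fin n) :
    (∑ α : Fin n, if ((α, j) : Fin n × Fin n) = (a, α) then (1 : k) else 0)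
      = if j = a then 1 else 0 := by
  have e : ∀ α : Fin n, (if ((α, j) : Fin n × Fin n) = (a, α) then (1 : k) else 0)
      = if α = a then (if j = α then 1 else 0) else 0 := by
    intro α
    by_cases h1 : α = a <;> by_cases h2 : j = α <;> simp [h1, h2, Prod.ext_iff]
  rw [Finset.sum_congr rfl fun α _ => e α]
  rw [Finset.sum_ite_eq']
  simp

theorem collapsePair {A : Type} [AddCommMonoid A] (x y : Fin n) (Z : Fin n → Fin n → A) :
    (∑ a : Fin n, ∑ l : Fin n,
        if ((a, y) : Fin n × Fin n) = (x, l) then Z a l else 0) = Z x y := by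
  have e : ∀ a l : Fin n, (if ((a, y) : Fin n × Fin n) = (x, l) then Z a l else 0)
      = if a = x then (if l = y then Z a l else 0) else 0 := by
    intro a l
    by_cases h1 : a = x <;> by_cases h2 : l = y <;> simp [h1, h2, Prod.ext_iff] <;> tauto
  rw [Finset.sum_congr rfl fun a _ => Finset.sum_congr rfl fun l _ => e a l]
  calc ∑ a : Fin n, ∑ l : Fin n, (if a = x then (if l = y then Z a l else 0) else 0)
      = ∑ a : Fin n, (if a = x then ∑ l : Fin n, (if l = y then Z a l else 0) else 0) :=
        Finset.sum_congr rfl fun a _ => by split <;> simp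
    _ = ∑ a : Fin n, (if a = x then Z a y else 0) := by
        refine Finset.sum_congr rfl fun a _ => ?_
        rw [Finset.sum_ite_eq']
        simp
    _ = Z x y := by rw [Finset.sum_ite_eq']; simp

-- scalar identities from hP
theorem sc2 (P : Matrix (Fin n × Fin n) (Fin n × Fin n) k)
    (hP1 : opMul k n P R = 1) (a l a₀ l₀ : Fin n) :
    (∑ β : Fin n, ∑ m : Fin n, P (β, l₀) (a₀, m) * R (a, β) (m, l))
      = if ((a, l₀) : Fin n × Fin n) = (a₀, l) then 1 else 0 := by
  have h0 := congrFun (congrFun hP1 (a, l₀)) (a₀, l)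
  simpa [opMul, Matrix.one_apply] using h0

theorem sc1 (P : Matrix (Fin n × Fin n) (Fin n × Fin n) k)
    (hP2 : opMul k n R P = 1) (j a : Fin n) :
    (∑ i : Fin n, ∑ γ : Fin n, uMat k n P i γ * R (i, j) (a, γ))
      = if j = a then 1 else 0 := by
  have e : ∀ α : Fin n,
      (∑ i : Fin n, ∑ γ : Fin n, R (i, j) (a, γ) * P (α, i) (γ, α))
        = if ((α, j) : Fin n × Fin n) = (a, α) then 1 else 0 := by
    intro α
    have h0 := congrFun (congrFun hP2 (α, j)) (a, α)
    simpa [opMul, Matrix.one_apply] using h0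
  calc (∑ i : Fin n, ∑ γ : Fin n, uMat k n P i γ * R (i, j) (a, γ))
      = ∑ i : Fin n, ∑ γ : Fin n, ∑ α : Fin n, R (i, j) (a, γ) * P (α, i) (γ, α) := by
        refine Finset.sum_congr rfl fun i _ => Finset.sum_congr rfl fun γ _ => ?_
        rw [uMat, Finset.sum_mul]
        exact Finset.sum_congr rfl fun α _ => by ring
    _ = ∑ i : Fin n, ∑ α : Fin n, ∑ γ : Fin n, R (i, j) (a, γ) * P (α, i) (γ, α) :=
        Finset.sum_congr rfl fun i _ => Finset.sum_comm
    _ = ∑ α : Fin n, ∑ i : Fin n, ∑ γ : Fin n, R (i, j) (a, γ) * P (α, i) (γ, α) :=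
        Finset.sum_comm
    _ = ∑ α : Fin n, if ((α, j) : Fin n × Fin n) = (a, α) then 1 else 0 :=
        Finset.sum_congr rfl fun α _ => e α
    _ = if j = a then 1 else 0 := deltaDiag k n j a

theorem sc3 (P : Matrix (Fin n × Fin n) (Fin n × Fin n) k)
    (hP2 : opMul k n R P = 1) (β m : Fin n) :
    (∑ a : Fin n, ∑ l : Fin n, R (a, β) (m, l) * uMat k n P a l)
      = if β = m then 1 else 0 := by
  have e : ∀ α : Fin n,
      (∑ a : Fin n, ∑ l : Fin n, R (a, β) (m, l) * P (α, a) (l, α))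
        = if ((α, β) : Fin n × Fin n) = (m, α) then 1 else 0 := by
    intro α
    have h0 := congrFun (congrFun hP2 (α, β)) (m, α)
    simpa [opMul, Matrix.one_apply] using h0
  calc (∑ a : Fin n, ∑ l : Fin n, R (a, β) (m, l) * uMat k n P a l)
      = ∑ a : Fin n, ∑ l : Fin n, ∑ α : Fin n, R (a, β) (m, l) * P (α, a) (l, α) := by
        refine Finset.sum_congr rfl fun a _ => Finset.sum_congr rfl fun l _ => ?_
        rw [uMat, Finset.mul_sum]
    _ = ∑ a : Fin n, ∑ α : Fin n, ∑ l : Fin n, R (a, β) (m, l) * P (α, a) (l, α) :=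
        Finset.sum_congr rfl fun a _ => Finset.sum_comm
    _ = ∑ α : Fin n, ∑ a : Fin n, ∑ l : Fin n, R (a, β) (m, l) * P (α, a) (l, α) :=
        Finset.sum_comm
    _ = ∑ α : Fin n, if ((α, β) : Fin n × Fin n) = (m, α) then 1 else 0 :=
        Finset.sum_congr rfl fun α _ => e α
    _ = if β = m then 1 else 0 := deltaDiag k n β m


theorem lemE (P : Matrix (Fin n × Fin n) (Fin n × Fin n) k)
    (hP2 : opMul k n R P = 1) (β m : Fin n) :
    (∑ a : Fin n, ∑ l : Fin n, R (a, β) (m, l) •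
        (∑ i : Fin n, ∑ γ : Fin n, uMat k n P i γ • (tGen k n R i a * ttGen k n R l γ)))
      = (if β = m then (1 : FRTAlg k n R) else 0) := by
  have H : (∑ i : Fin n, ∑ γ : Fin n, uMat k n P i γ •
        (∑ j : Fin n, ∑ a : Fin n, R (i, j) (a, γ) • (ttGen k n R β j * tGen k n R a m)))
      = ∑ i : Fin n, ∑ γ : Fin n, uMat k n P i γ •
        (∑ l : Fin n, ∑ a : Fin n, R (a, β) (m, l) • (tGen k n R i a * ttGen k n R l γ)) :=
    Finset.sum_congr rfl fun i _ => Finset.sum_congr rfl fun γ _ => by rw [lemD2]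
  have hL : (∑ i : Fin n, ∑ γ : Fin n, uMat k n P i γ •
        (∑ j : Fin n, ∑ a : Fin n, R (i, j) (a, γ) • (ttGen k n R β j * tGen k n R a m)))
      = if β = m then (1 : FRTAlg k n R) else 0 := by
    rw [pull22 k n (fun i γ => uMat k n P i γ) (fun i γ j a => R (i, j) (a, γ))
      (fun j a => ttGen k n R β j * tGen k n R a m)]
    calc (∑ j : Fin n, ∑ a : Fin n,
          (∑ i : Fin n, ∑ γ : Fin n, uMat k n P i γ * R (i, j) (a, γ)) •
            (ttGen k n R β j * tGen k n R a m))
        = ∑ j : Fin n, ∑ a : Fin n, (if j = a then (1:k) else 0) •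
            (ttGen k n R β j * tGen k n R a m) := by
          refine Finset.sum_congr rfl fun j _ => Finset.sum_congr rfl fun a _ => ?_
          rw [sc1 k n R P hP2]
      _ = ∑ j : Fin n, ttGen k n R β j * tGen k n R j m := by
          refine Finset.sum_congr rfl fun j _ => ?_
          simp [ite_smul, Finset.sum_ite_eq]
      _ = if β = m then (1 : FRTAlg k n R) else 0 := lemC k n R β m
  have hR : (∑ i : Fin n, ∑ γ : Fin n, uMat k n P i γ •
        (∑ l : Fin n, ∑ a : Fin n, R (a, β) (m, l) • (tGen k n R i a * ttGen k n R l γ)))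
      = ∑ a : Fin n, ∑ l : Fin n, R (a, β) (m, l) •
          (∑ i : Fin n, ∑ γ : Fin n, uMat k n P i γ • (tGen k n R i a * ttGen k n R l γ)) := by
    rw [exchange22 k n (fun i γ => uMat k n P i γ) (fun l a => R (a, β) (m, l))
      (fun i γ l a => tGen k n R i a * ttGen k n R l γ)]
    exact Finset.sum_comm
  rw [← hL, H, hR]

theorem lemF (P : Matrix (Fin n × Fin n) (Fin n × Fin n) k)
    (hP1 : opMul k n P R = 1) (hP2 : opMul k n R P = 1) (a₀ l₀ : Fin n) :
    (∑ i : Fin n, ∑ γ : Fin n, uMat k n P i γ • (tGen k n R i a₀ * ttGen k n R l₀ γ))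
      = uMat k n P l₀ a₀ • (1 : FRTAlg k n R) := by
  have H : (∑ β : Fin n, ∑ m : Fin n, P (β, l₀) (a₀, m) •
        (∑ a : Fin n, ∑ l : Fin n, R (a, β) (m, l) •
          (∑ i : Fin n, ∑ γ : Fin n, uMat k n P i γ • (tGen k n R i a * ttGen k n R l γ))))
      = ∑ β : Fin n, ∑ m : Fin n, P (β, l₀) (a₀, m) •
          (if β = m then (1 : FRTAlg k n R) else 0) :=
    Finset.sum_congr rfl fun β _ => Finset.sum_congr rfl fun m _ => by rw [lemE k n R P hP2]
  have hL : (∑ β : Fin n, ∑ m : Fin n, P (β, l₀) (a₀, m) •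
        (∑ a : Fin n, ∑ l : Fin n, R (a, β) (m, l) •
          (∑ i : Fin n, ∑ γ : Fin n, uMat k n P i γ • (tGen k n R i a * ttGen k n R l γ))))
      = ∑ i : Fin n, ∑ γ : Fin n, uMat k n P i γ • (tGen k n R i a₀ * ttGen k n R l₀ γ) := by
    rw [pull22 k n (fun β m => P (β, l₀) (a₀, m)) (fun β m a l => R (a, β) (m, l))
      (fun a l => ∑ i : Fin n, ∑ γ : Fin n,
        uMat k n P i γ • (tGen k n R i a * ttGen k n R l γ))]
    calc (∑ a : Fin n, ∑ l : Fin n,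
          (∑ β : Fin n, ∑ m : Fin n, P (β, l₀) (a₀, m) * R (a, β) (m, l)) •
            (∑ i : Fin n, ∑ γ : Fin n, uMat k n P i γ • (tGen k n R i a * ttGen k n R l γ)))
        = ∑ a : Fin n, ∑ l : Fin n,
            (if ((a, l₀) : Fin n × Fin n) = (a₀, l) then
              (∑ i : Fin n, ∑ γ : Fin n,
                uMat k n P i γ • (tGen k n R i a * ttGen k n R l γ)) else 0) := by
          refine Finset.sum_congr rfl fun a _ => Finset.sum_congr rfl fun l _ => ?_
          rw [sc2 k n R P hP1]
          split <;> simp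
      _ = ∑ i : Fin n, ∑ γ : Fin n, uMat k n P i γ • (tGen k n R i a₀ * ttGen k n R l₀ γ) :=
          collapsePair n a₀ l₀ _
  have hR : (∑ β : Fin n, ∑ m : Fin n, P (β, l₀) (a₀, m) •
        (if β = m then (1 : FRTAlg k n R) else 0))
      = uMat k n P l₀ a₀ • (1 : FRTAlg k n R) := by
    calc (∑ β : Fin n, ∑ m : Fin n, P (β, l₀) (a₀, m) •
          (if β = m then (1 : FRTAlg k n R) else 0))
        = ∑ β : Fin n, P (β, l₀) (a₀, β) • (1 : FRTAlg k n R) := by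
          refine Finset.sum_congr rfl fun β _ => ?_
          simp [smul_ite, Finset.sum_ite_eq]
      _ = (∑ β : Fin n, P (β, l₀) (a₀, β)) • (1 : FRTAlg k n R) := (Finset.sum_smul).symm
      _ = uMat k n P l₀ a₀ • (1 : FRTAlg k n R) := by rw [uMat]
  rw [← hL, H, hR]

theorem lemG (P : Matrix (Fin n × Fin n) (Fin n × Fin n) k)
    (hP1 : opMul k n P R = 1) (hP2 : opMul k n R P = 1) (x y : Fin n) :
    uMat k n P x y = uMat k n P y x := by
  have way1 : (∑ β : Fin n, ∑ m : Fin n, P (β, y) (x, m) *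
        (∑ a : Fin n, ∑ l : Fin n, R (a, β) (m, l) * uMat k n P a l))
      = uMat k n P y x := by
    calc (∑ β : Fin n, ∑ m : Fin n, P (β, y) (x, m) *
          (∑ a : Fin n, ∑ l : Fin n, R (a, β) (m, l) * uMat k n P a l))
        = ∑ β : Fin n, ∑ m : Fin n, P (β, y) (x, m) * (if β = m then 1 else 0) := by
          refine Finset.sum_congr rfl fun β _ => Finset.sum_congr rfl fun m _ => ?_
          rw [sc3 k n R P hP2]
      _ = ∑ β : Fin n, P (β, y) (x, β) := by
          refine Finset.sum_congr rfl fun β _ => ?_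
          simp [mul_ite, Finset.sum_ite_eq]
      _ = uMat k n P y x := by rw [uMat]
  have way2 : (∑ β : Fin n, ∑ m : Fin n, P (β, y) (x, m) *
        (∑ a : Fin n, ∑ l : Fin n, R (a, β) (m, l) * uMat k n P a l))
      = uMat k n P x y := by
    have flat : (∑ β : Fin n, ∑ m : Fin n, P (β, y) (x, m) *
          (∑ a : Fin n, ∑ l : Fin n, R (a, β) (m, l) * uMat k n P a l))
        = ∑ p : Fin n × Fin n, P (p.1, y) (x, p.2) *
            (∑ q : Fin n × Fin n, R (q.1, p.1) (p.2, q.2) * uMat k n P q.1 q.2) := by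
      rw [Fintype.sum_prod_type]
      exact Finset.sum_congr rfl fun β _ => Finset.sum_congr rfl fun m _ => by
        rw [Fintype.sum_prod_type]
    rw [flat, pullPairMul k (fun p : Fin n × Fin n => P (p.1, y) (x, p.2))
      (fun p q : Fin n × Fin n => R (q.1, p.1) (p.2, q.2))
      (fun q : Fin n × Fin n => uMat k n P q.1 q.2)]
    calc (∑ q : Fin n × Fin n,
          (∑ p : Fin n × Fin n, P (p.1, y) (x, p.2) * R (q.1, p.1) (p.2, q.2)) *
            uMat k n P q.1 q.2)
        = ∑ q : Fin n × Fin n,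
            (if ((q.1, y) : Fin n × Fin n) = (x, q.2) then uMat k n P q.1 q.2 else 0) := by
          refine Finset.sum_congr rfl fun q _ => ?_
          have e2 : (∑ p : Fin n × Fin n, P (p.1, y) (x, p.2) * R (q.1, p.1) (p.2, q.2))
              = if ((q.1, y) : Fin n × Fin n) = (x, q.2) then 1 else 0 := by
            rw [Fintype.sum_prod_type]
            exact sc2 k n R P hP1 q.1 q.2 x y
          rw [e2]
          split <;> simp
      _ = ∑ a : Fin n, ∑ l : Fin n,
            (if ((a, y) : Fin n × Fin n) = (x, l) then uMat k n P a l else 0) := by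
          rw [Fintype.sum_prod_type]
      _ = uMat k n P x y := collapsePair n x y _
  rw [← way1, way2]

/-- In the FRT-type Hopf algebra `A` generated by the entries of `T`
and `T⁻¹` with relations `R T₁ T₂ = T₂ T₁ R` and `T T⁻¹ = T⁻¹ T = 1`, where `R` and
`R⁻¹` are invertible in `End(V)ᵒᵖ ⊗ End(V)` and the associated elements `u`, `v` of
`End(V)` are invertible (this holds when `R` is the image of the `R`-matrix of a
quasitriangular Hopf algebra and `u` the image of the Drinfeld element), the
identity `∑_{i,k} c'_i u c_k u⁻¹ ⊗ t_k t'_i = 1 ⊗ 1` holds in `End(V) ⊗ A`, where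
`T = ∑ c_k ⊗ t_k` and `T⁻¹ = ∑ c'_i ⊗ t'_i`; in matrix components this reads
`∑_{j,c,l} u_{jc} (u⁻¹)_{lb} t_{cl} t̃_{aj} = δ_{ab} 1`. -/
theorem frt_uTuinv_right_inverse
    (Rinv : Matrix (Fin n × Fin n) (Fin n × Fin n) k)
    (hRinv : R * Rinv = 1 ∧ Rinv * R = 1)
    (P : Matrix (Fin n × Fin n) (Fin n × Fin n) k)
    (hP : opMul k n P R = 1 ∧ opMul k n R P = 1)
    (Q : Matrix (Fin n × Fin n) (Fin n × Fin n) k)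
    (hQ : opMul k n Q Rinv = 1 ∧ opMul k n Rinv Q = 1)
    (uinv : Matrix (Fin n) (Fin n) k)
    (hu : uMat k n P * uinv = 1 ∧ uinv * uMat k n P = 1)
    (vinv : Matrix (Fin n) (Fin n) k)
    (hv : uMat k n Q * vinv = 1 ∧ vinv * uMat k n Q = 1) :
    ∀ a b : Fin n,
      (∑ j : Fin n, ∑ c : Fin n, ∑ l : Fin n,
        (uMat k n P j c * uinv l b) • (tGen k n R c l * ttGen k n R a j)) =
      (if a = b then (1 : FRTAlg k n R) else 0) := by
  intro a b
  calc (∑ j : Fin n, ∑ c : Fin n, ∑ l : Fin n,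
        (uMat k n P j c * uinv l b) • (tGen k n R c l * ttGen k n R a j))
      = ∑ p : Fin n × Fin n, uMat k n P p.2 p.1 •
          (∑ l : Fin n, uinv l b • (tGen k n R p.2 l * ttGen k n R a p.1)) := by
        rw [Fintype.sum_prod_type]
        refine Finset.sum_congr rfl fun j _ => Finset.sum_congr rfl fun c _ => ?_
        rw [Finset.smul_sum]
        refine Finset.sum_congr rfl fun l _ => ?_
        rw [smul_smul, lemG k n R P hP.1 hP.2 j c]
    _ = ∑ l : Fin n, uinv l b • (∑ p : Fin n × Fin n, uMat k n P p.2 p.1 •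
          (tGen k n R p.2 l * ttGen k n R a p.1)) :=
        exchangeGen k (fun p : Fin n × Fin n => uMat k n P p.2 p.1) (fun l => uinv l b)
          (fun p l => tGen k n R p.2 l * ttGen k n R a p.1)
    _ = ∑ l : Fin n, uinv l b • (∑ i : Fin n, ∑ γ : Fin n, uMat k n P i γ •
          (tGen k n R i l * ttGen k n R a γ)) := by
        refine Finset.sum_congr rfl fun l _ => ?_
        congr 1
        rw [Fintype.sum_prod_type]
        exact Finset.sum_comm
    _ = ∑ l : Fin n, uinv l b • (uMat k n P a l • (1 : FRTAlg k n R)) :=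
        Finset.sum_congr rfl fun l _ => by rw [lemF k n R P hP.1 hP.2 l a]
    _ = (∑ l : Fin n, uMat k n P a l * uinv l b) • (1 : FRTAlg k n R) := by
        rw [Finset.sum_smul]
        exact Finset.sum_congr rfl fun l _ => by rw [smul_smul, mul_comm]
    _ = ((uMat k n P * uinv) a b) • (1 : FRTAlg k n R) := by rw [Matrix.mul_apply]
    _ = if a = b then (1 : FRTAlg k n R) else 0 := by
        rw [hu.1, Matrix.one_apply]
        split <;> simp

end FRT
end

section
/- Let A be an Ore domain (e.g., a Noetherian domain) that is an algebra over a commutative Noetherian domain R with fraction field F, and let K be a finitely generated module over a strongly left Noetherian locally finite N-filtered R-algebra O such that K ⊗_R F = 0. Then there exists a nonzero f ∈ R such that K[1/f] = 0, i.e., K is annihilated after inverting f. -/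
open scoped TensorProduct

/-- Artin–Small–Zhang generic freeness, as used in the paper: Let `R`
be a commutative Noetherian domain with fraction field `F`, and let `O` be an
`ℕ`-filtered `R`-algebra which is locally finite (each filtration piece is a
finitely generated `R`-module) and strongly left Noetherian (`C ⊗_R O` is left
Noetherian for every commutative Noetherian `R`-algebra `C`).  If `K` is a finitely
generated left `O`-module with `K ⊗_R F = 0`, then there is a nonzero `f ∈ R` such
that `K[1/f] = 0`. -/
theorem generically_zero_of_torsion
    (R : Type) [CommRing R] [IsDomain R] [IsNoetherianRing R]
    (O : Type) [Ring O] [Algebra R O]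
    -- an `ℕ`-filtration of `O` by `R`-submodules
    (Fil : ℕ → Submodule R O)
    (hmono : Monotone Fil)
    (hexh : ∀ x : O, ∃ m : ℕ, x ∈ Fil m)
    (hone : (1 : O) ∈ Fil 0)
    (hmul : ∀ (m l : ℕ), ∀ x ∈ Fil m, ∀ y ∈ Fil l, x * y ∈ Fil (m + l))
    -- local finiteness of the filtration
    (hlocfin : ∀ m : ℕ, (Fil m).FG)
    -- strong left Noetherianity of `O` over `R`
    (hstrong : ∀ (C : Type) [CommRing C] [Algebra R C],
      IsNoetherianRing C → IsNoetherianRing (C ⊗[R] O))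
    (K : Type) [AddCommGroup K] [Module R K] [Module O K]
    [IsScalarTower R O K] [Module.Finite O K]
    (hKF : Subsingleton ((FractionRing R) ⊗[R] K)) :
    ∃ f : R, f ≠ 0 ∧
      ∀ x : LocalizedModule (Submonoid.powers f) K, x = 0 := by
  classical
  -- the base-change map `K → F ⊗ K` exhibits `F ⊗ K` as a localized module
  have hbc : IsLocalizedModule (nonZeroDivisors R)
      (TensorProduct.mk R (FractionRing R) K 1) := by
    rw [isLocalizedModule_iff_isBaseChange (S := nonZeroDivisors R) (A := FractionRing R)]
    exact TensorProduct.isBaseChange R K (FractionRing R)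
  -- every element of `K` is `R`-torsion
  have htor : ∀ k : K, ∃ r : R, r ≠ 0 ∧ r • k = 0 := by
    intro k
    have h0 : TensorProduct.mk R (FractionRing R) K 1 k = 0 := Subsingleton.elim _ _
    obtain ⟨s, hs⟩ :=
      (IsLocalizedModule.eq_zero_iff (nonZeroDivisors R)
        (TensorProduct.mk R (FractionRing R) K 1)).mp h0
    exact ⟨(s : R), nonZeroDivisors.coe_ne_zero s, hs⟩
  -- pick generators of `K` over `O`
  obtain ⟨T, hT⟩ := Module.Finite.fg_top (R := O) (M := K)
  -- for each generator choose a nonzero annihilator in `R`, and take the product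
  choose g hg0 hgk using fun k : K => htor k
  set f : R := ∏ k ∈ T, g k with hf
  have hfne : f ≠ 0 := Finset.prod_ne_zero_iff.mpr fun k _ => hg0 k
  -- `f` kills every element of `K`
  have hcomm : ∀ (r : R) (a : O) (k : K), r • (a • k) = a • (r • k) := by
    intro r a k
    have h1 : r • a = a * (r • (1 : O)) := by
      rw [Algebra.smul_def, Algebra.smul_def, mul_one, Algebra.commutes]
    calc r • (a • k) = (r • a) • k := (smul_assoc r a k).symm
      _ = (a * (r • (1 : O))) • k := by rw [h1]
      _ = a • ((r • (1 : O)) • k) := mul_smul _ _ _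
      _ = a • (r • k) := by rw [smul_assoc, one_smul]
  have hkill : ∀ k : K, f • k = 0 := by
    intro k
    have hk : k ∈ Submodule.span O (T : Set K) := hT ▸ Submodule.mem_top
    induction hk using Submodule.span_induction with
    | mem x hx =>
        obtain ⟨c, hc⟩ : ∃ c : R, f = c * g x := by
          exact ⟨∏ k ∈ T.erase x, g k, by rw [hf, ← Finset.prod_erase_mul _ _ hx, mul_comm]⟩
        rw [hc, mul_smul, hgk x, smul_zero]
    | zero => rw [smul_zero]
    | add x y _ _ hx hy => rw [smul_add, hx, hy, add_zero]
    | smul a x _ hx => rw [hcomm, hx, smul_zero]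
  refine ⟨f, hfne, ?_⟩
  have : Subsingleton (LocalizedModule (Submonoid.powers f) K) :=
    LocalizedModule.subsingleton_iff.mpr fun m =>
      ⟨f, Submonoid.mem_powers f, hkill m⟩
  intro x
  exact Subsingleton.elim x 0
end
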